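/- An element l ∈ ℤⁿ satisfies l > 0 in the lexicographic order if and only if l ≠ 0 and there exists λ such that the set {k·l : k ∈ ℕ, k ≥ 1} is contained in the 'upper set' ℤⁿ_λ. -/

import Mathlib

/-- The index set `Λₙ` (here `Lambda n` corresponds to `Λ_{n+1}`):
`Λ₁ = ℤ` and `Λₙ = Map(ℤ, Λₙ₋₁) × ℤ`. -/
@[reducible] def Lambda : ℕ → Type
  | 0 => ℤ
  | n + 1 => (ℤ → Lambda n) × ℤ

/-- The subset `ℤⁿ_λ ⊆ ℤⁿ` (in dimension `n+1`):
`ℤ_λ = {l ≥ λ}` and `ℤⁿ_{(λ',λₙ)} = ⋃_{lₙ ≥ λₙ} ℤⁿ⁻¹_{λ'(lₙ)} × {lₙ}`. -/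
def Zset : (n : ℕ) → Lambda n → Set (Fin (n + 1) → ℤ)
  | 0, lam => {l | lam ≤ l 0}
  | n + 1, lam => {l | lam.2 ≤ l (Fin.last (n + 1)) ∧
      Fin.init l ∈ Zset n (lam.1 (l (Fin.last (n + 1))))}

/-- The lexicographic order on `ℤⁿ` with the *last* coordinate most significant. -/
def lexLt {n : ℕ} (x y : Fin n → ℤ) : Prop :=
  ∃ i : Fin n, x i < y i ∧ ∀ j : Fin n, i < j → x j = y j

lemma key_nonneg (a c : ℤ) (h : ∀ k : ℕ, 1 ≤ k → a ≤ (k : ℤ) * c) : 0 ≤ c := by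
  by_contra hc
  push_neg at hc
  have h1 := h (a.natAbs + 1) (by omega)
  have h2 : ((a.natAbs + 1 : ℕ) : ℤ) * c ≤ ((a.natAbs + 1 : ℕ) : ℤ) * (-1) :=
    mul_le_mul_of_nonneg_left (by omega) (by positivity)
  rw [mul_neg_one] at h2
  simp only [Nat.cast_add, Nat.cast_one] at h1 h2
  omega

lemma Zset_cover : ∀ (n : ℕ) (x : Fin (n + 1) → ℤ), ∃ lam, x ∈ Zset n lam
  | 0, x => ⟨x 0, by simp [Zset]⟩
  | n + 1, x => by
    obtain ⟨mu, hmu⟩ := Zset_cover n (Fin.init x)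
    exact ⟨(fun _ => mu, x (Fin.last (n + 1))), le_refl _, hmu⟩

/-- An element `l ∈ ℤⁿ` is lexicographically positive iff `l ≠ 0` and there is
`λ ∈ Λₙ` such that all positive multiples `k·l` lie in `ℤⁿ_λ`. -/
theorem lexPos_iff_multiples_in_Zset (n : ℕ) (l : Fin (n + 1) → ℤ) :
    lexLt 0 l ↔ l ≠ 0 ∧ ∃ lam : Lambda n,
      ∀ k : ℕ, 1 ≤ k → (fun i => (k : ℤ) * l i) ∈ Zset n lam := by
  induction n with
  | zero =>
    constructor
    · rintro ⟨i, hi, -⟩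
      simp only [Pi.zero_apply] at hi
      have hi0 : i = 0 := Fin.eq_zero _
      subst hi0
      refine ⟨fun h => by simp [h] at hi, 1, fun k hk => ?_⟩
      show (1 : ℤ) ≤ (k : ℤ) * l 0
      have hk' : (1 : ℤ) ≤ (k : ℤ) := by exact_mod_cast hk
      nlinarith
    · rintro ⟨hl, lam, h⟩
      have h0 : 0 ≤ l 0 := key_nonneg lam _ (fun k hk => by simpa [Zset] using h k hk)
      have hne : l 0 ≠ 0 := fun h0' => hl (funext fun i => by
        have : i = 0 := Fin.eq_zero _
        simp [this, h0'])
      refine ⟨0, ?_, fun j hj => ?_⟩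
      · simpa using lt_of_le_of_ne h0 (Ne.symm hne)
      · have : j = 0 := Fin.eq_zero _
        subst this
        exact absurd hj (lt_irrefl _)
  | succ n ih =>
    constructor
    · rintro ⟨i, hi, hj⟩
      simp only [Pi.zero_apply] at hi hj
      have hne : l ≠ 0 := fun h => by simp [h] at hi
      refine ⟨hne, ?_⟩
      by_cases hc : i = Fin.last (n + 1)
      · subst hc
        refine ⟨(fun m => Classical.choose
            (Zset_cover n (fun j => (m / l (Fin.last (n + 1))) * l j.castSucc)),
            l (Fin.last (n + 1))), fun k hk => ?_⟩
        have hk' : (1 : ℤ) ≤ (k : ℤ) := by exact_mod_cast hk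
        constructor
        · show l (Fin.last (n + 1)) ≤ (k : ℤ) * l (Fin.last (n + 1))
          nlinarith
        · have hdiv : ((k : ℤ) * l (Fin.last (n + 1))) / l (Fin.last (n + 1)) = (k : ℤ) :=
            Int.mul_ediv_cancel _ (ne_of_gt hi)
          have hspec := Classical.choose_spec
            (Zset_cover n (fun j => ((((k : ℤ) * l (Fin.last (n + 1)))
              / l (Fin.last (n + 1)))) * l j.castSucc))
          have hx : Fin.init (fun i => (k : ℤ) * l i)
              = fun j => ((((k : ℤ) * l (Fin.last (n + 1)))
                / l (Fin.last (n + 1)))) * l j.castSucc := by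
            funext j
            simp [Fin.init, hdiv]
          show Fin.init (fun i => (k : ℤ) * l i) ∈ Zset n _
          rw [hx]
          exact hspec
      · have hlast : l (Fin.last (n + 1)) = 0 :=
          (hj (Fin.last (n + 1)) (Fin.lt_last_iff_ne_last.2 hc)).symm
        obtain ⟨i', rfl⟩ := Fin.exists_castSucc_eq.2 hc
        have hinit : lexLt 0 (Fin.init l) := by
          refine ⟨i', by simpa [Fin.init] using hi, fun j hj' => ?_⟩
          simpa [Fin.init] using hj j.castSucc (by simpa using hj')
        obtain ⟨-, mu, hmu⟩ := (ih (Fin.init l)).1 hinit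
        refine ⟨(fun _ => mu, 0), fun k hk => ?_⟩
        constructor
        · show (0 : ℤ) ≤ (k : ℤ) * l (Fin.last (n + 1))
          simp [hlast]
        · show Fin.init (fun i => (k : ℤ) * l i) ∈ Zset n _
          have hx : Fin.init (fun i => (k : ℤ) * l i)
              = fun i => (k : ℤ) * Fin.init l i := by
            funext j; simp [Fin.init]
          rw [hx]
          exact hmu k hk
    · rintro ⟨hl, lam, h⟩
      have h0 : 0 ≤ l (Fin.last (n + 1)) :=
        key_nonneg lam.2 _ (fun k hk => (h k hk).1)
      rcases lt_or_eq_of_le h0 with hlt | heq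
      · exact ⟨Fin.last (n + 1), by simpa using hlt,
          fun j hj => absurd hj (not_lt.2 (Fin.le_last j))⟩
      · have hlast : l (Fin.last (n + 1)) = 0 := heq.symm
        have hinitne : Fin.init l ≠ 0 := by
          intro h0'
          apply hl
          funext i
          refine Fin.lastCases ?_ (fun j => ?_) i
          · exact hlast
          · have := congrFun h0' j
            simpa [Fin.init] using this
        have hmem : ∀ k : ℕ, 1 ≤ k →
            (fun i => (k : ℤ) * Fin.init l i) ∈ Zset n (lam.1 0) := by
          intro k hk
          have h2 := (h k hk).2
          have hx : Fin.init (fun i => (k : ℤ) * l i)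
              = fun i => (k : ℤ) * Fin.init l i := by
            funext j; simp [Fin.init]
          rw [hx] at h2
          simpa [hlast] using h2
        obtain ⟨i, hi, hj⟩ := (ih (Fin.init l)).2 ⟨hinitne, lam.1 0, hmem⟩
        refine ⟨i.castSucc, by simpa [Fin.init] using hi, fun j hj' => ?_⟩
        refine Fin.lastCases ?_ (fun j' hj'' => ?_) j hj'
        · simp [hlast]
        · simpa [Fin.init] using hj j' (by simpa using hj'')
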